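/- Upper bound on shooting value: if u₀ > h·∫₀ᵀ e^{-(r+δ)t}(P(X₀e^{-δt})-c) dt, then the solution of the forward system X' = -δX + (1/β)(u-α)⁺, u' = (r+δ)u - (P(X)-c)h starting from (X₀,u₀) (with P nonincreasing so that P(X(t)) ≤ P(X₀e^{-δt})) satisfies u(T) > 0. -/

import Mathlib

open Set Real intervalIntegral

def IsForwardSol (δ β r h α c : ℝ) (P : ℝ → ℝ) (T : ℝ) (X u : ℝ → ℝ) : Prop :=
  ∀ t ∈ Set.Icc (0 : ℝ) T,
    HasDerivAt X (-δ * X t + (1 / β) * max (u t - α) 0) t ∧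
    HasDerivAt u ((r + δ) * u t - (P (X t) - c) * h) t

/-- If the initial costate lies strictly above
`h · ∫₀ᵀ e^{-(r+δ)t}(P(X₀e^{-δt})-c) dt`, then the terminal costate is positive. -/
theorem stmt_7 (δ β r h T α c X₀ : ℝ) (hδ : 0 < δ) (hβ : 0 < β) (hr : 0 < r)
    (hh : 0 < h) (hT : 0 < T) (hα : 0 < α) (hX₀ : 0 ≤ X₀)
    (P : ℝ → ℝ) (hP : Continuous P) (hPmono : Antitone P)
    (X u : ℝ → ℝ) (u₀ : ℝ)
    (hsol : IsForwardSol δ β r h α c P T X u)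
    (hX0 : X 0 = X₀) (hu0 : u 0 = u₀)
    (hbig : u₀ > h * ∫ t in (0:ℝ)..T,
      Real.exp (-(r + δ) * t) * (P (X₀ * Real.exp (-δ * t)) - c)) :
    u T > 0 := by
  have hT0 : (0:ℝ) ≤ T := hT.le
  have hIcc : Set.uIcc (0:ℝ) T = Set.Icc 0 T := Set.uIcc_of_le hT0
  have hXc : ContinuousOn X (Set.Icc 0 T) := fun t ht =>
    ((hsol t ht).1.continuousAt).continuousWithinAt
  -- the function w = exp(δ t) X t is monotone on [0,T]
  have hwderiv : ∀ t ∈ Set.Icc (0:ℝ) T,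
      HasDerivAt (fun s => Real.exp (δ * s) * X s)
        (Real.exp (δ * t) * ((1/β) * max (u t - α) 0)) t := by
    intro t ht
    have h1 : HasDerivAt (fun s => Real.exp (δ * s)) (δ * Real.exp (δ * t)) t := by
      have := (Real.hasDerivAt_exp (δ * t)).comp t ((hasDerivAt_id t).const_mul δ)
      simpa [mul_comm, Function.comp_def] using this
    have h2 := h1.mul (hsol t ht).1
    exact h2.congr_deriv (by ring)
  have hwmono : MonotoneOn (fun s => Real.exp (δ * s) * X s) (Set.Icc 0 T) := by
    apply monotoneOn_of_deriv_nonneg (convex_Icc 0 T)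
    · intro t ht; exact ((hwderiv t ht).continuousAt).continuousWithinAt
    · intro t ht
      rw [interior_Icc] at ht
      exact (hwderiv t (Set.Ioo_subset_Icc_self ht)).differentiableAt.differentiableWithinAt
    · intro t ht
      rw [interior_Icc] at ht
      rw [(hwderiv t (Set.Ioo_subset_Icc_self ht)).deriv]
      have h3 : (0:ℝ) ≤ max (u t - α) 0 := le_max_right _ _
      have h4 : (0:ℝ) ≤ 1/β := by positivity
      exact mul_nonneg (Real.exp_pos _).le (mul_nonneg h4 h3)
  -- lower bound on X
  have hXlb : ∀ t ∈ Set.Icc (0:ℝ) T, X₀ * Real.exp (-δ * t) ≤ X t := by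
    intro t ht
    have h0 : (0:ℝ) ∈ Set.Icc (0:ℝ) T := ⟨le_rfl, hT0⟩
    have hm := hwmono h0 ht ht.1
    simp only [mul_zero, Real.exp_zero, one_mul, hX0] at hm
    have hp : (0:ℝ) < Real.exp (δ * t) := Real.exp_pos _
    have he : Real.exp (-δ * t) = (Real.exp (δ * t))⁻¹ := by
      rw [← Real.exp_neg]; ring_nf
    rw [he, ← div_eq_mul_inv, div_le_iff₀ hp, mul_comm]
    exact hm
  have hPle : ∀ t ∈ Set.Icc (0:ℝ) T,
      P (X t) ≤ P (X₀ * Real.exp (-δ * t)) := fun t ht => hPmono (hXlb t ht)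
  -- FTC for v = exp(-(r+δ)t) u t
  have hvderiv : ∀ t ∈ Set.Icc (0:ℝ) T,
      HasDerivAt (fun s => Real.exp (-(r+δ) * s) * u s)
        ((Real.exp (-(r+δ) * t) * (P (X t) - c)) * (-h)) t := by
    intro t ht
    have h1 : HasDerivAt (fun s => Real.exp (-(r+δ) * s)) (-(r+δ) * Real.exp (-(r+δ) * t)) t := by
      have := ((hasDerivAt_id t).const_mul (-(r+δ))).exp
      simpa [mul_comm] using this
    have h2 := h1.mul (hsol t ht).2
    exact h2.congr_deriv (by ring)
  have hgc : ContinuousOn (fun t => Real.exp (-(r+δ) * t) * (P (X t) - c)) (Set.Icc 0 T) := by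
    exact ((Real.continuous_exp.comp (continuous_const.mul continuous_id)).continuousOn).mul
      ((hP.comp_continuousOn hXc).sub continuousOn_const)
  have hgint : IntervalIntegrable (fun t => Real.exp (-(r+δ) * t) * (P (X t) - c)) MeasureTheory.volume 0 T := by
    apply ContinuousOn.intervalIntegrable
    rw [hIcc]; exact hgc
  have hgint2 : IntervalIntegrable (fun t => (Real.exp (-(r+δ) * t) * (P (X t) - c)) * (-h)) MeasureTheory.volume 0 T :=
    hgint.mul_const _
  have hftc := intervalIntegral.integral_eq_sub_of_hasDerivAt
    (f := fun s => Real.exp (-(r+δ) * s) * u s) (fun t ht => hvderiv t (hIcc ▸ ht)) hgint2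
  rw [intervalIntegral.integral_mul_const] at hftc
  -- compare integrals
  have hcmp : ∫ t in (0:ℝ)..T, Real.exp (-(r+δ) * t) * (P (X t) - c) ≤
      ∫ t in (0:ℝ)..T, Real.exp (-(r + δ) * t) * (P (X₀ * Real.exp (-δ * t)) - c) := by
    apply intervalIntegral.integral_mono_on hT0 hgint
    · apply ContinuousOn.intervalIntegrable
      rw [hIcc]
      exact ((Real.continuous_exp.comp (continuous_const.mul continuous_id)).continuousOn).mul
        (((hP.comp ((continuous_const.mul (Real.continuous_exp.comp
          (continuous_const.mul continuous_id))))).continuousOn).sub continuousOn_const)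
    · intro t ht
      have hp := hPle t ht
      have he := (Real.exp_pos (-(r+δ) * t)).le
      nlinarith
  -- conclude
  have hv0 : Real.exp (-(r+δ) * 0) * u 0 = u₀ := by simp [hu0]
  have hvT : 0 < Real.exp (-(r+δ) * T) * u T := by
    have hI : h * ∫ t in (0:ℝ)..T, Real.exp (-(r+δ) * t) * (P (X t) - c) ≤
        h * ∫ t in (0:ℝ)..T, Real.exp (-(r + δ) * t) * (P (X₀ * Real.exp (-δ * t)) - c) :=
      mul_le_mul_of_nonneg_left hcmp hh.le
    have hftc' : (∫ x in (0:ℝ)..T, Real.exp (-(r+δ) * x) * (P (X x) - c)) * -h =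
        Real.exp (-(r+δ) * T) * u T - u₀ := by simpa [hu0] using hftc
    nlinarith [hftc']
  have hep := Real.exp_pos (-(r+δ) * T)
  by_contra hneg
  push_neg at hneg
  nlinarith
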